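/- For concave (submodular) valuations, the greedy posted-price outcome satisfies: for each player i ≠ r₁ and any alternative quantity x'_i, v̄_i(x_i) ≥ v̄_i(x'_i) − p̄·x'_i, where p̄ is the price per unit of the cheapest unsold portion. That is, if player i stopped buying either because he exhausted his budget (π_i = B_i, so v̄_i(x_i) = B_i ≥ v̄_i(x'_i)) or because the marginal price exceeds his marginal value at x_i, then by concavity v_i(x'_i) − v_i(x_i) ≤ p̄·x'_i. -/

import Mathlib

/-- for a concave monotone valuation, if the player stopped
buying at `x` (before `x'`) either because he exhausted his budget or because
the marginal price `p' ≤ p̄` exceeds his marginal value at `x`, then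
`v̄(x) ≥ v̄(x') − p̄·x'`. -/
theorem stmt17 (v : ℝ → ℝ) (B : ℝ) (hB : 0 ≤ B)
    (hmono : MonotoneOn v (Set.Icc 0 1))
    (hconc : ConcaveOn ℝ (Set.Icc 0 1) v)
    (hv0 : v 0 = 0)
    (x x' pbar : ℝ) (hx : x ∈ Set.Icc (0:ℝ) 1) (hx' : x' ∈ Set.Icc (0:ℝ) 1)
    (hpbar : 0 ≤ pbar)
    (hstop : x < x' →
      (min (v x) B = B ∨
        ∃ p' : ℝ, p' ≤ pbar ∧ ∃ ε₀ > (0:ℝ), ∀ ε : ℝ, 0 ≤ ε → ε ≤ ε₀ →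
          x + ε ≤ 1 → v (x + ε) ≤ v x + p' * ε)) :
    min (v x') B - pbar * x' ≤ min (v x) B := by
  have hx'0 : (0:ℝ) ≤ x' := hx'.1
  have hpx' : 0 ≤ pbar * x' := mul_nonneg hpbar hx'0
  rcases le_or_gt x' x with hle | hlt
  · have h1 : v x' ≤ v x := hmono hx' hx hle
    have : min (v x') B ≤ min (v x) B := min_le_min h1 le_rfl
    linarith
  · rcases hstop hlt with hbud | ⟨p', hp', ε₀, hε₀, hmarg⟩
    · have : min (v x') B ≤ B := min_le_right _ _
      rw [hbud]; linarith
    · set d := x' - x with hd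
      have hd0 : 0 < d := by simp [hd]; linarith
      set ε := min ε₀ d with hε
      have hε0 : 0 < ε := lt_min hε₀ hd0
      have hεd : ε ≤ d := min_le_right _ _
      have hx1 : x + ε ≤ 1 := by
        have : x + ε ≤ x' := by simp [hd] at hεd; linarith
        linarith [hx'.2]
      set b := ε / d with hb
      have hb0 : 0 < b := div_pos hε0 hd0
      have hb1 : b ≤ 1 := (div_le_one hd0).2 hεd
      have ha0 : 0 ≤ 1 - b := by linarith
      have hbd : b * d = ε := by rw [hb, div_mul_cancel₀ _ hd0.ne']
      have hcomb : (1 - b) * v x + b * v x' ≤ v ((1-b) • x + b • x') :=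
        hconc.2 hx hx' ha0 hb0.le (by ring)
      have hpt : (1-b) • x + b • x' = x + ε := by
        simp only [smul_eq_mul]
        have : b * x' - b * x = ε := by rw [← mul_sub, ← hd, hbd]
        linarith
      rw [hpt] at hcomb
      have hmarg' : v (x + ε) ≤ v x + p' * ε := hmarg ε hε0.le (min_le_left _ _) hx1
      -- b * (v x' - v x) ≤ p' * ε = p' * b * d
      have key : v x' - v x ≤ p' * d := by
        have h2 : b * (v x' - v x) ≤ p' * ε := by nlinarith
        rw [← hbd] at h2
        have := (mul_le_mul_iff_of_pos_left hb0).1 (by linarith [h2] : b * (v x' - v x) ≤ b * (p' * d))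
        linarith
      have hpd : p' * d ≤ pbar * x' := by
        have h3 : p' * d ≤ pbar * d := mul_le_mul_of_nonneg_right hp' hd0.le
        have h4 : pbar * d ≤ pbar * x' := by
          apply mul_le_mul_of_nonneg_left _ hpbar
          simp [hd]; linarith [hx.1]
        linarith
      have hvx' : v x' ≤ v x + pbar * x' := by linarith
      apply le_min
      · calc min (v x') B - pbar * x' ≤ v x' - pbar * x' := by
              linarith [min_le_left (v x') B]
          _ ≤ v x := by linarith
      · linarith [min_le_right (v x') B]
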